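/- Define d n := b n · b (n+5) − b (n+2) · b (n+3). Then for every n ≥ 0, b (n+7) · d n = b (n+1) · d (n+3). -/

import Mathlib

/-- The ECHO sequence. -/
def echo : ℕ → ℚ
  | 0 => 1
  | 1 => 1
  | 2 => 2
  | 3 => 1
  | n + 4 =>
      (echo (n + 3) * echo (n + 1) - (if 3 ∣ (n + 4) then 3 else 1) * echo (n + 2) ^ 2) /
        echo n

/-- The derived sequence d. -/
def dseq (n : ℕ) : ℚ := echo n * echo (n + 5) - echo (n + 2) * echo (n + 3)

/-- Residue pattern of `echo` modulo 5, period 24. -/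
def rpat : ℕ → ZMod 5
  | 0 => 1 | 1 => 1 | 2 => 2 | 3 => 1 | 4 => 2 | 5 => 3 | 6 => 3 | 7 => 2
  | 8 => 1 | 9 => 2 | 10 => 1 | 11 => 1 | 12 => 4 | 13 => 4 | 14 => 3 | 15 => 4
  | 16 => 3 | 17 => 2 | 18 => 2 | 19 => 3 | 20 => 4 | 21 => 3 | 22 => 4 | 23 => 4
  | _ + 24 => 0

def rr (n : ℕ) : ZMod 5 := rpat (n % 24)

lemma rr_ne_zero (n : ℕ) : rr n ≠ 0 := by
  unfold rr
  have h : n % 24 < 24 := Nat.mod_lt _ (by norm_num)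
  set m := n % 24 with hm
  clear_value m
  interval_cases m <;> decide

lemma key (n : ℕ) :
    rr (n+3) * rr (n+1) - (if 3 ∣ (n+4) then (3 : ZMod 5) else 1) * rr (n+2)^2
      = rr (n+4) * rr n := by
  unfold rr
  have h : n % 24 < 24 := Nat.mod_lt _ (by norm_num)
  have e1 : (n+1) % 24 = (n % 24 + 1) % 24 := by omega
  have e2 : (n+2) % 24 = (n % 24 + 2) % 24 := by omega
  have e3 : (n+3) % 24 = (n % 24 + 3) % 24 := by omega
  have e4 : (n+4) % 24 = (n % 24 + 4) % 24 := by omega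
  have e5 : (3 ∣ (n+4)) = (3 ∣ (n % 24 + 4)) := propext (by omega)
  rw [e1, e2, e3, e4]
  simp only [e5]
  set m := n % 24 with hm
  clear_value m
  interval_cases m <;> decide

lemma echo_add4 (n : ℕ) : echo (n+4) =
    (echo (n + 3) * echo (n + 1) - (if 3 ∣ (n + 4) then 3 else 1) * echo (n + 2) ^ 2) /
      echo n := rfl

def G (n : ℕ) : Prop :=
  ∃ u v : ℤ, ((v : ZMod 5) ≠ 0) ∧ ((u : ZMod 5) = rr n * v) ∧ echo n = (u : ℚ) / v

lemma G_step (n : ℕ) (g0 : G n) (g1 : G (n+1)) (g2 : G (n+2)) (g3 : G (n+3)) :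
    G (n+4) := by
  haveI : Fact (Nat.Prime 5) := ⟨by norm_num⟩
  obtain ⟨u0, v0, hv0, hu0, he0⟩ := g0
  obtain ⟨u1, v1, hv1, hu1, he1⟩ := g1
  obtain ⟨u2, v2, hv2, hu2, he2⟩ := g2
  obtain ⟨u3, v3, hv3, hu3, he3⟩ := g3
  have hu0' : (u0 : ZMod 5) ≠ 0 := by
    rw [hu0]; exact mul_ne_zero (rr_ne_zero n) hv0
  have hvz : ∀ w : ℤ, ((w : ZMod 5) ≠ 0) → (w : ℚ) ≠ 0 := by
    intro w hw
    simp only [ne_eq, Int.cast_eq_zero]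
    rintro rfl; exact hw (by norm_num)
  set C : ℤ := if 3 ∣ (n+4) then 3 else 1 with hC
  refine ⟨(u3*u1*v2^2 - C*u2^2*v3*v1)*v0, v3*v1*v2^2*u0, ?_, ?_, ?_⟩
  · intro h
    apply hu0'
    have := mul_ne_zero (mul_ne_zero (mul_ne_zero hv3 hv1) (pow_ne_zero 2 hv2)) hu0'
    push_cast at h
    exact absurd h this
  · have hCz : ((C : ℤ) : ZMod 5) = if 3 ∣ (n+4) then (3 : ZMod 5) else 1 := by
      rw [hC]; split_ifs <;> norm_num
    push_cast
    rw [hu0, hu1, hu2, hu3, hCz]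
    linear_combination (v3*v1*v2^2*v0 : ZMod 5) * key n
  · rw [echo_add4, he0, he1, he2, he3]
    have hCq : ((C : ℤ) : ℚ) = if 3 ∣ (n+4) then (3 : ℚ) else 1 := by
      rw [hC]; split_ifs <;> norm_num
    rw [← hCq]
    have h0 := hvz v0 hv0
    have h1 := hvz v1 hv1
    have h2 := hvz v2 hv2
    have h3 := hvz v3 hv3
    have h4 := hvz u0 hu0'
    field_simp
    push_cast
    ring

lemma G_all : ∀ n : ℕ, G n ∧ G (n+1) ∧ G (n+2) ∧ G (n+3) := by
  intro n
  induction n with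
  | zero =>
    refine ⟨⟨1, 1, ?_, ?_, ?_⟩, ⟨1, 1, ?_, ?_, ?_⟩, ⟨2, 1, ?_, ?_, ?_⟩, ⟨1, 1, ?_, ?_, ?_⟩⟩ <;>
      first | decide | norm_num [echo]
  | succ k ih =>
    exact ⟨ih.2.1, ih.2.2.1, ih.2.2.2, G_step k ih.1 ih.2.1 ih.2.2.1 ih.2.2.2⟩

lemma echo_ne_zero (n : ℕ) : echo n ≠ 0 := by
  obtain ⟨u, v, hv, hu, he⟩ := (G_all n).1
  haveI : Fact (Nat.Prime 5) := ⟨by norm_num⟩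
  have hu' : (u : ZMod 5) ≠ 0 := by rw [hu]; exact mul_ne_zero (rr_ne_zero n) hv
  rw [he]
  apply div_ne_zero
  · simp only [ne_eq, Int.cast_eq_zero]; rintro rfl; exact hu' (by norm_num)
  · simp only [ne_eq, Int.cast_eq_zero]; rintro rfl; exact hv (by norm_num)

lemma somos (n : ℕ) : echo (n+4) * echo n =
    echo (n + 3) * echo (n + 1) - (if 3 ∣ (n + 4) then 3 else 1) * echo (n + 2) ^ 2 := by
  rw [echo_add4, div_mul_cancel₀ _ (echo_ne_zero n)]

lemma dval : ∀ n : ℕ, echo n * echo (n+5) - echo (n+2) * echo (n+3) =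
    (if 3 ∣ n then (3 : ℚ) else 1) * (echo (n+1) * echo (n+4)) := by
  intro n
  induction n with
  | zero =>
    have e4 : echo 4 = -3 := by norm_num [echo_add4, echo]
    have e5 : echo 5 = -7 := by
      have : echo 5 = echo (1+4) := by norm_num
      rw [this, echo_add4]; norm_num [echo, e4]
    norm_num [echo, e4, e5]
  | succ k ih =>
    have h4 := somos k
    have h6 := somos (k+2)
    have ec1 : (3 ∣ (k+4)) = (3 ∣ (k+1)) := propext (by omega)
    have ec2 : (3 ∣ (k+2+4)) = (3 ∣ k) := propext (by omega)
    simp only [ec1] at h4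
    simp only [ec2] at h6
    have harr : ∀ i : ℕ, k + 2 + i = k + (2 + i) := fun i => by omega
    rw [harr 4, harr 3, harr 1, harr 2] at h6
    set C0 : ℚ := if 3 ∣ k then (3 : ℚ) else 1 with hC0
    set C1 : ℚ := if 3 ∣ (k+1) then (3 : ℚ) else 1 with hC1
    have goal_shift : ∀ i : ℕ, k + 1 + i = k + (1 + i) := fun i => by omega
    rw [goal_shift 5, goal_shift 2, goal_shift 3, goal_shift 1, goal_shift 4]
    norm_num
    have hmain : echo k * echo (k+2) *
        (echo (k+1) * echo (k+6) - echo (k+3) * echo (k+4) - C1 * (echo (k+2) * echo (k+5))) = 0 := by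
      linear_combination (echo k * echo (k+1)) * h6 +
        (echo (k+1) * echo (k+3) - C1 * echo (k+2)^2) * ih +
        (-C0 * echo (k+1) * echo (k+4) - echo (k+2) * echo (k+3)) * h4
    have hne := mul_ne_zero (echo_ne_zero k) (echo_ne_zero (k+2))
    have := (mul_eq_zero.mp hmain).resolve_left hne
    linarith [this]

/-- For every n, b (n+7) · d n = b (n+1) · d (n+3). -/
theorem echo_d_relation :
    ∀ n : ℕ, echo (n + 7) * dseq n = echo (n + 1) * dseq (n + 3) := by
  intro n
  unfold dseq
  have harr : ∀ i : ℕ, n + 3 + i = n + (3 + i) := fun i => by omega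
  rw [harr 5, harr 2, harr 3]
  norm_num
  rw [dval n, dval (n+3)]
  have : (3 ∣ (n+3)) = (3 ∣ n) := propext (by omega)
  simp only [this]
  have h4 : n + 4 = n + 3 + 1 := by omega
  have h7 : n + 7 = n + 3 + 4 := by omega
  rw [h4, h7]
  ring
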